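/- Let c = e^{−2} / (3·√3·√(e^{−1} − 2e^{−2})). Then: (a) liminf_{n→∞} log₂(N(n)) / n^{n−1/2} ≥ c, where N(n) is the number of subsemigroups of the full transformation semigroup T_n; and (b) liminf_{n→∞} d(n) / n^{n−1/2} ≥ c, where d(n) is the smallest number such that every subsemigroup of T_n can be generated by at most d(n) elements. -/

import Mathlib

open Filter Finset

/-- `d(n)`: the least `d` such that every subsemigroup of the full transformation
semigroup `T_n` has a generating set of size at most `d`. -/
noncomputable def minGeneratorBound (n : ℕ) : ℕ :=
  sInf {d : ℕ | ∀ T : Subsemigroup (Function.End (Fin n)),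
    ∃ A : Finset (Function.End (Fin n)), A.card ≤ d ∧ Subsemigroup.closure ↑A = T}

section Defs

instance instFintypeEnd (n : ℕ) : Fintype (Function.End (Fin n)) :=
  inferInstanceAs (Fintype (Fin n → Fin n))

instance instFiniteSubsemigroupEnd (n : ℕ) : Finite (Subsemigroup (Function.End (Fin n))) :=
  Finite.of_injective (fun T => (T : Set (Function.End (Fin n)))) (SetLike.coe_injective)

variable (n : ℕ) [NeZero n]

/-- rank of a transformation -/
def rk (f : Function.End (Fin n)) : ℕ := (Finset.univ.image f).card

open Classical in
/-- the good set: image avoids 0, and `f 0` not in the image of the rest -/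
noncomputable def Fg : Finset (Function.End (Fin n)) :=
  Finset.univ.filter (fun f => (∀ x, f x ≠ 0) ∧ ∀ x, x ≠ 0 → f x ≠ f 0)

/-- good functions of rank `k` -/
noncomputable def Uk (k : ℕ) : Finset (Function.End (Fin n)) := (Fg n).filter (fun f => rk n f = k)

/-- absorbing ideal: avoids 0, rank `< k` -/
def Zk (k : ℕ) : Set (Function.End (Fin n)) := {h | (∀ x, h x ≠ 0) ∧ rk n h < k}

lemma mem_Fg_iff {f : Function.End (Fin n)} :
    f ∈ Fg n ↔ (∀ x, f x ≠ 0) ∧ ∀ x, x ≠ 0 → f x ≠ f 0 := by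
  simp [Fg]

lemma rk_pos (f : Function.End (Fin n)) : 0 < rk n f := by
  have : (0 : Fin n) ∈ Finset.univ := Finset.mem_univ _
  exact Finset.card_pos.2 ⟨f 0, Finset.mem_image_of_mem f this⟩

lemma mem_image_End (f : Function.End (Fin n)) (p : Fin n) :
    p ∈ Finset.univ.image f ↔ ∃ x, f x = p := by
  exact Finset.mem_image.trans (by simp)

/-- the key multiplication lemma -/
lemma mul_mem_Zk {k : ℕ} {f g : Function.End (Fin n)}
    (hf : f ∈ Zk n k ∪ ↑(Uk n k)) (hg : g ∈ Zk n k ∪ ↑(Uk n k)) :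
    f * g ∈ Zk n k := by
  have hg1 : ∀ x, g x ≠ 0 := by
    rcases hg with h | h
    · exact h.1
    · exact ((mem_Fg_iff n).1 (Finset.mem_filter.1 h).1).1
  constructor
  · intro x
    rcases hf with h | h
    · exact h.1 (g x)
    · exact ((mem_Fg_iff n).1 (Finset.mem_filter.1 h).1).1 (g x)
  · rcases hf with h | h
    · -- rank f < k, image of f*g inside image of f
      refine lt_of_le_of_lt (Finset.card_le_card ?_) h.2
      intro y hy
      rcases Finset.mem_image.1 hy with ⟨x, _, rfl⟩
      exact Finset.mem_image_of_mem f (Finset.mem_univ (g x))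
    · -- f ∈ Uk: image of f*g inside (image f).erase (f 0)
      have hfg := Finset.mem_filter.1 h
      have hP := (mem_Fg_iff n).1 hfg.1
      have hsub : Finset.univ.image (f * g) ⊆ (Finset.univ.image f).erase (f 0) := by
        intro y hy
        rcases Finset.mem_image.1 hy with ⟨x, _, rfl⟩
        refine Finset.mem_erase.2 ⟨hP.2 (g x) (hg1 x), Finset.mem_image_of_mem f (Finset.mem_univ (g x))⟩
      have h1 : ((Finset.univ.image f).erase (f 0)).card < rk n f := by
        have : f 0 ∈ Finset.univ.image f := Finset.mem_image_of_mem f (Finset.mem_univ 0)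
        rw [Finset.card_erase_of_mem this]
        exact Nat.sub_lt (rk_pos n f) one_pos
      calc rk n (f * g) ≤ _ := Finset.card_le_card hsub
        _ < rk n f := h1
        _ = k := hfg.2

lemma Uk_disj_Zk {k : ℕ} {f : Function.End (Fin n)} (hf : f ∈ Uk n k) : f ∉ Zk n k := by
  intro h
  have h1 := (Finset.mem_filter.1 hf).2
  have h2 := h.2
  omega

end Defs
section Semi

variable (n : ℕ) [NeZero n]

/-- the subsemigroup attached to a subset `S` of `Uk n k` -/
def subOf (k : ℕ) (S : Finset (Function.End (Fin n))) (hS : S ⊆ Uk n k) :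
    Subsemigroup (Function.End (Fin n)) where
  carrier := Zk n k ∪ ↑S
  mul_mem' := by
    intro a b ha hb
    have hS' : (S : Set (Function.End (Fin n))) ⊆ ↑(Uk n k) := by exact_mod_cast hS
    have ha' : a ∈ Zk n k ∪ ↑(Uk n k) := by
      rcases ha with h | h
      · exact Or.inl h
      · exact Or.inr (hS' h)
    have hb' : b ∈ Zk n k ∪ ↑(Uk n k) := by
      rcases hb with h | h
      · exact Or.inl h
      · exact Or.inr (hS' h)
    exact Or.inl (mul_mem_Zk n ha' hb')

lemma subOf_inj (k : ℕ) (S S' : Finset (Function.End (Fin n))) (hS : S ⊆ Uk n k)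
    (hS' : S' ⊆ Uk n k) (h : subOf n k S hS = subOf n k S' hS') : S = S' := by
  have hcar : Zk n k ∪ (S : Set (Function.End (Fin n))) = Zk n k ∪ ↑S' :=
    congrArg (fun T : Subsemigroup (Function.End (Fin n)) =>
      (T : Set (Function.End (Fin n)))) h
  ext f
  constructor
  · intro hf
    have h1 : f ∈ Zk n k ∪ (S' : Set (Function.End (Fin n))) := hcar ▸ Or.inr (by exact_mod_cast hf)
    rcases h1 with h1 | h1
    · exact absurd h1 (Uk_disj_Zk n (hS hf))
    · exact_mod_cast h1
  · intro hf
    have h1 : f ∈ Zk n k ∪ (S : Set (Function.End (Fin n))) := hcar ▸ Or.inr (by exact_mod_cast hf)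
    rcases h1 with h1 | h1
    · exact absurd h1 (Uk_disj_Zk n (hS' hf))
    · exact_mod_cast h1

/-- counting lower bound -/
lemma pow_card_le (k : ℕ) :
    2 ^ (Uk n k).card ≤ Nat.card (Subsemigroup (Function.End (Fin n))) := by
  classical
  have := Nat.card_le_card_of_injective
    (fun S : {S : Finset (Function.End (Fin n)) // S ∈ (Uk n k).powerset} =>
      subOf n k S.1 (Finset.mem_powerset.1 S.2))
    (by
      intro S S' h
      exact Subtype.ext (subOf_inj n k S.1 S'.1 _ _ h))
  rwa [Nat.card_eq_finsetCard, Finset.card_powerset] at this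

/-- generating set lower bound -/
lemma card_le_minGen (k : ℕ) : (Uk n k).card ≤ minGeneratorBound n := by
  classical
  set Sset := {d : ℕ | ∀ T : Subsemigroup (Function.End (Fin n)),
    ∃ A : Finset (Function.End (Fin n)), A.card ≤ d ∧ Subsemigroup.closure ↑A = T} with hSset
  have hne : Sset.Nonempty := by
    refine ⟨Fintype.card (Function.End (Fin n)), fun T => ?_⟩
    refine ⟨(T : Set (Function.End (Fin n))).toFinset, Finset.card_le_univ _, ?_⟩
    rw [Set.coe_toFinset]
    exact Subsemigroup.closure_eq T
  have hmem := Nat.sInf_mem hne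
  obtain ⟨A, hcard, hclos⟩ := hmem (subOf n k (Uk n k) (subset_refl _))
  refine le_trans ?_ hcard
  refine Finset.card_le_card ?_
  -- every element of Uk is in A
  intro u hu
  have huW : u ∈ subOf n k (Uk n k) (subset_refl _) := Or.inr (by exact_mod_cast hu)
  rw [← hclos] at huW
  have key : ∀ (x : Function.End (Fin n)), x ∈ Subsemigroup.closure (↑A : Set _) →
      x ∈ A ∨ x ∈ Zk n k := by
    intro x hx
    induction hx using Subsemigroup.closure_induction with
    | mem y hy => exact Or.inl (by exact_mod_cast hy)
    | mul y z hy hz _ _ =>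
      rw [hclos] at hy hz
      exact Or.inr (mul_mem_Zk n (by exact_mod_cast hy) (by exact_mod_cast hz))
  rcases key u huW with h | h
  · exact h
  · exact absurd h (Uk_disj_Zk n hu)

end Semi
section Count

variable (n : ℕ) [NeZero n]

open Classical in
lemma count_avoid (s : Finset (Fin n)) (h0 : (0 : Fin n) ∈ s) :
    ((Fg n).filter (fun f => ∀ x, f x ∉ s)).card
      = (n - s.card) * (n - s.card - 1) ^ (n - 1) := by
  classical
  have hmaps : ∀ f ∈ (Fg n).filter (fun f => ∀ x, f x ∉ s), f 0 ∈ Finset.univ \ s := by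
    intro f hf
    exact Finset.mem_sdiff.2 ⟨Finset.mem_univ _, (Finset.mem_filter.1 hf).2 0⟩
  rw [Finset.card_eq_sum_card_fiberwise hmaps]
  have hcard : ∀ b ∈ Finset.univ \ s,
      (((Fg n).filter (fun f => ∀ x, f x ∉ s)).filter (fun f => f 0 = b)).card
        = (n - s.card - 1) ^ (n - 1) := by
    intro b hb
    have hbs : b ∉ s := (Finset.mem_sdiff.1 hb).2
    set t : Fin n → Finset (Fin n) :=
      fun x => if x = 0 then {b} else (Finset.univ \ s).erase b with ht
    have hset : ((Fg n).filter (fun f => ∀ x, f x ∉ s)).filter (fun f => f 0 = b)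
        = Fintype.piFinset t := by
      ext f
      have hpi : f ∈ Fintype.piFinset t ↔ ∀ x, f x ∈ t x := Fintype.mem_piFinset
      refine Iff.trans ?_ hpi.symm
      simp only [Finset.mem_filter, mem_Fg_iff, ht]
      constructor
      · rintro ⟨⟨⟨h1, h2⟩, h3⟩, h4⟩
        intro x
        by_cases hx : x = 0
        · subst hx; simp [h4]
        · simp only [if_neg hx, Finset.mem_erase, Finset.mem_sdiff, Finset.mem_univ, true_and]
          exact ⟨h4 ▸ h2 x hx, h3 x⟩
      · intro h
        have h00 := h 0
        simp only [if_true, eq_self_iff_true, Finset.mem_singleton] at h00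
        have hx' : ∀ x, x ≠ 0 → f x ≠ b ∧ f x ∉ s := by
          intro x hx
          have := h x
          simp only [if_neg hx, Finset.mem_erase, Finset.mem_sdiff, Finset.mem_univ,
            true_and] at this
          exact this
        refine ⟨⟨⟨?_, ?_⟩, ?_⟩, h00⟩
        · intro x
          by_cases hx : x = 0
          · subst hx; rw [h00]; intro hc; exact hbs (hc ▸ h0)
          · intro hc; exact (hx' x hx).2 (hc ▸ h0)
        · intro x hx; rw [h00]; exact (hx' x hx).1
        · intro x
          by_cases hx : x = 0
          · subst hx; rw [h00]; exact hbs
          · exact (hx' x hx).2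
    rw [hset]; refine (Fintype.card_piFinset t).trans ?_
    rw [← Finset.mul_prod_erase Finset.univ _ (Finset.mem_univ (0 : Fin n))]
    have h1 : (t 0).card = 1 := by simp [ht]
    have h2 : ∀ x ∈ Finset.univ.erase (0 : Fin n), (t x).card = n - s.card - 1 := by
      intro x hx
      have hx0 : x ≠ 0 := (Finset.mem_erase.1 hx).1
      simp only [ht, if_neg hx0]
      rw [Finset.card_erase_of_mem hb, Finset.card_sdiff_of_subset (Finset.subset_univ s)]
      simp [Finset.card_univ]
    rw [h1, Finset.prod_congr rfl h2, Finset.prod_const, one_mul,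
      Finset.card_erase_of_mem (Finset.mem_univ _), Finset.card_univ, Fintype.card_fin]
  rw [Finset.sum_congr rfl hcard, Finset.sum_const,
    Finset.card_sdiff_of_subset (Finset.subset_univ s), Finset.card_univ, Fintype.card_fin,
    smul_eq_mul]

end Count
section Moments

variable (n : ℕ) [NeZero n]

/-- number of points missed by `f` -/
def Yc (f : Function.End (Fin n)) : ℕ := (Finset.univ \ Finset.univ.image f).card

lemma N_eq : (Fg n).card = (n - 1) * (n - 2) ^ (n - 1) := by
  classical
  have h := count_avoid n {0} (Finset.mem_singleton_self 0)
  rw [Finset.filter_true_of_mem (fun f hf => ?_)] at h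
  · simpa [Nat.sub_sub] using h
  · intro x
    simp only [Finset.mem_singleton]
    exact ((mem_Fg_iff n).1 hf).1 x

lemma S1_eq :
    ∑ f ∈ Fg n, Yc n f
      = (n - 1) * (n - 2) ^ (n - 1) + (n - 1) * ((n - 2) * (n - 3) ^ (n - 1)) := by
  classical
  have hstep : ∀ f ∈ Fg n, Yc n f
      = ∑ p ∈ Finset.univ, if p ∉ Finset.univ.image f then 1 else 0 := by
    intro f _
    rw [Yc, Finset.sdiff_eq_filter, Finset.card_filter]
  rw [Finset.sum_congr rfl hstep, Finset.sum_comm]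
  have hfib : ∀ p : Fin n,
      (∑ f ∈ Fg n, if p ∉ Finset.univ.image f then 1 else 0)
        = (n - ({0, p} : Finset (Fin n)).card)
          * (n - ({0, p} : Finset (Fin n)).card - 1) ^ (n - 1) := by
    intro p
    rw [← count_avoid n {0, p} (by simp), Finset.card_filter]
    refine Finset.sum_congr rfl (fun f hf => ?_)
    refine if_congr ?_ rfl rfl
    have h1 := ((mem_Fg_iff n).1 hf).1
    simp only [mem_image_End, Finset.mem_univ, true_and, not_exists,
      Finset.mem_insert, Finset.mem_singleton, not_or]
    exact ⟨fun h x => ⟨h1 x, h x⟩, fun h x => (h x).2⟩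
  rw [Finset.sum_congr rfl (fun p _ => hfib p)]
  rw [← Finset.add_sum_erase Finset.univ _ (Finset.mem_univ (0 : Fin n))]
  have h0 : ({0, (0 : Fin n)} : Finset (Fin n)).card = 1 := by simp
  have hp : ∀ p ∈ Finset.univ.erase (0 : Fin n),
      (n - ({0, p} : Finset (Fin n)).card) * (n - ({0, p} : Finset (Fin n)).card - 1) ^ (n - 1)
        = (n - 2) * (n - 3) ^ (n - 1) := by
    intro p hp
    have hp0 : p ≠ 0 := (Finset.mem_erase.1 hp).1
    have : ({0, p} : Finset (Fin n)).card = 2 := Finset.card_pair (Ne.symm hp0)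
    rw [this, Nat.sub_sub]
  rw [h0, Finset.sum_congr rfl hp, Finset.sum_const,
    Finset.card_erase_of_mem (Finset.mem_univ _), Finset.card_univ, Fintype.card_fin,
    smul_eq_mul, Nat.sub_sub]

lemma S2_eq :
    ∑ f ∈ Fg n, Yc n f * (Yc n f - 1)
      = 2 * ((n - 1) * ((n - 2) * (n - 3) ^ (n - 1)))
        + (n - 1) * ((n - 2) * ((n - 3) * (n - 4) ^ (n - 1))) := by
  classical
  have hstep : ∀ f ∈ Fg n, Yc n f * (Yc n f - 1)
      = ∑ pq ∈ Finset.univ.offDiag,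
          if pq.1 ∉ Finset.univ.image f ∧ pq.2 ∉ Finset.univ.image f then 1 else 0 := by
    intro f _
    rw [← Finset.card_filter]
    have hset : (Finset.univ \ Finset.univ.image f).offDiag
        = Finset.univ.offDiag.filter
            (fun pq => pq.1 ∉ Finset.univ.image f ∧ pq.2 ∉ Finset.univ.image f) := by
      ext ⟨p, q⟩
      simp only [Finset.mem_offDiag, Finset.mem_filter, Finset.mem_sdiff, Finset.mem_univ,
        true_and]
      tauto
    have hy : Yc n f * (Yc n f - 1)
        = (Finset.univ \ Finset.univ.image f).offDiag.card := by
      rw [Finset.offDiag_card, Yc, Nat.mul_sub, mul_one]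
    rw [hy, hset, Finset.card_filter]
  rw [Finset.sum_congr rfl hstep, Finset.sum_comm]
  have hfib : ∀ pq ∈ (Finset.univ : Finset (Fin n)).offDiag,
      (∑ f ∈ Fg n, if pq.1 ∉ Finset.univ.image f ∧ pq.2 ∉ Finset.univ.image f then 1 else 0)
        = if pq.1 = 0 ∨ pq.2 = 0 then (n - 2) * (n - 3) ^ (n - 1)
          else (n - 3) * (n - 4) ^ (n - 1) := by
    rintro ⟨p, q⟩ hpq
    have hne : p ≠ q := (Finset.mem_offDiag.1 hpq).2.2
    have hcnt := count_avoid n {0, p, q} (by simp)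
    have hcond : ∀ f ∈ Fg n,
        ((p ∉ Finset.univ.image f ∧ q ∉ Finset.univ.image f) ↔
          ∀ x, f x ∉ ({0, p, q} : Finset (Fin n))) := by
      intro f hf
      have h0 := ((mem_Fg_iff n).1 hf).1
      simp only [mem_image_End, Finset.mem_univ, true_and, not_exists,
        Finset.mem_insert, Finset.mem_singleton, not_or]
      exact ⟨fun h x => ⟨h0 x, h.1 x, h.2 x⟩,
        fun h => ⟨fun x => (h x).2.1, fun x => (h x).2.2⟩⟩
    rw [← Finset.card_filter, Finset.filter_congr hcond, hcnt]
    by_cases hp : p = 0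
    · subst hp
      have hq : q ≠ 0 := Ne.symm hne
      have : ({0, 0, q} : Finset (Fin n)).card = 2 := by
        rw [Finset.insert_idem]
        exact Finset.card_pair (Ne.symm hq)
      rw [this, if_pos (Or.inl rfl), Nat.sub_sub]
    · by_cases hq : q = 0
      · subst hq
        have : ({0, p, 0} : Finset (Fin n)).card = 2 := by
          rw [Finset.pair_comm p 0, Finset.insert_idem]
          exact Finset.card_pair (Ne.symm hp)
        rw [this, if_pos (Or.inr rfl), Nat.sub_sub]
      · have : ({0, p, q} : Finset (Fin n)).card = 3 := by
          rw [Finset.card_insert_of_notMem (by simp [Ne.symm hp, Ne.symm hq]),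
            Finset.card_pair hne]
        rw [this, if_neg (by simp [hp, hq]), Nat.sub_sub]
  rw [Finset.sum_congr rfl hfib, Finset.sum_ite, Finset.sum_const, Finset.sum_const]
  have hc1 : ((Finset.univ : Finset (Fin n)).offDiag.filter
      (fun pq => pq.1 = 0 ∨ pq.2 = 0)).card = 2 * (n - 1) := by
    have hset : (Finset.univ : Finset (Fin n)).offDiag.filter
        (fun pq => pq.1 = 0 ∨ pq.2 = 0)
          = ({(0 : Fin n)} ×ˢ (Finset.univ.erase 0)) ∪ ((Finset.univ.erase 0) ×ˢ {0}) := by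
      ext ⟨p, q⟩
      simp only [Finset.mem_filter, Finset.mem_offDiag, Finset.mem_univ, true_and,
        Finset.mem_union, Finset.mem_product, Finset.mem_singleton, Finset.mem_erase,
        and_true]
      constructor
      · rintro ⟨hne, rfl | rfl⟩
        · exact Or.inl ⟨rfl, Ne.symm hne⟩
        · exact Or.inr ⟨hne, rfl⟩
      · rintro (⟨rfl, hq⟩ | ⟨hp, rfl⟩)
        · exact ⟨Ne.symm hq, Or.inl rfl⟩
        · exact ⟨hp, Or.inr rfl⟩
    rw [hset, Finset.card_union_of_disjoint, Finset.card_product, Finset.card_product]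
    · simp only [Finset.card_singleton, Finset.card_erase_of_mem (Finset.mem_univ _),
        Finset.card_univ, Fintype.card_fin, one_mul, mul_one]
      omega
    · rw [Finset.disjoint_left]
      rintro ⟨p, q⟩ h1 h2
      rw [Finset.mem_product, Finset.mem_singleton] at h1
      rw [Finset.mem_product, Finset.mem_erase] at h2
      exact h2.1.1 h1.1
  have hc2 : ((Finset.univ : Finset (Fin n)).offDiag.filter
      (fun pq => ¬(pq.1 = 0 ∨ pq.2 = 0))).card = (n - 1) * (n - 2) := by
    have htot := Finset.card_filter_add_card_filter_not
      (s := (Finset.univ : Finset (Fin n)).offDiag) (p := fun pq => pq.1 = 0 ∨ pq.2 = 0)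
    have hrfl : ((Finset.univ : Finset (Fin n)).offDiag.filter
        (fun a => ¬(fun pq : Fin n × Fin n => pq.1 = 0 ∨ pq.2 = 0) a)).card
          = ((Finset.univ : Finset (Fin n)).offDiag.filter
            (fun pq => ¬(pq.1 = 0 ∨ pq.2 = 0))).card := rfl
    rw [hrfl] at htot
    rw [hc1, Finset.offDiag_card, Finset.card_univ, Fintype.card_fin] at htot
    have hn1 : 1 ≤ n := Nat.one_le_iff_ne_zero.2 (NeZero.ne n)
    rcases Nat.lt_or_ge n 2 with hn | hn
    · interval_cases n
      all_goals simp_all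
    · have e0 : n * n - n = n * (n - 1) := by rw [Nat.mul_sub, mul_one]
      have e1 : (n-1) * (n-2) + 2 * (n-1) = n * (n-1) := by
        have : n - 2 + 2 = n := by omega
        calc (n-1) * (n-2) + 2 * (n-1) = (n - 2 + 2) * (n-1) := by ring
          _ = n * (n-1) := by rw [this]
      omega
  rw [hc1, hc2, smul_eq_mul, smul_eq_mul]
  ring

end Moments
section Cheb

/-- real forms of the count and moments -/
noncomputable def Nr (n : ℕ) : ℝ := ((n : ℝ) - 1) * ((n : ℝ) - 2) ^ (n - 1)
noncomputable def S1r (n : ℕ) : ℝ :=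
  Nr n + ((n : ℝ) - 1) * (((n : ℝ) - 2) * ((n : ℝ) - 3) ^ (n - 1))
noncomputable def S2r (n : ℕ) : ℝ :=
  2 * (((n : ℝ) - 1) * (((n : ℝ) - 2) * ((n : ℝ) - 3) ^ (n - 1)))
    + ((n : ℝ) - 1) * (((n : ℝ) - 2) * (((n : ℝ) - 3) * ((n : ℝ) - 4) ^ (n - 1)))
noncomputable def muf (n : ℕ) : ℝ := S1r n / Nr n
noncomputable def Vr (n : ℕ) : ℝ := S2r n + S1r n - S1r n ^ 2 / Nr n
noncomputable def tauf (n : ℕ) : ℝ := Real.sqrt (3 * Vr n / Nr n + 1)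

lemma cast_sub_real (a : ℕ) {m : ℕ} (h : m ≤ a) : ((a - m : ℕ) : ℝ) = (a : ℝ) - m := by
  push_cast [Nat.cast_sub h]; ring

variable (n : ℕ) [NeZero n]

lemma Nr_pos (hn : 5 ≤ n) : 0 < Nr n := by
  have h1 : (0:ℝ) < (n:ℝ) - 1 := by
    have : (5:ℝ) ≤ (n:ℝ) := by exact_mod_cast hn
    linarith
  have h2 : (0:ℝ) < (n:ℝ) - 2 := by
    have : (5:ℝ) ≤ (n:ℝ) := by exact_mod_cast hn
    linarith
  exact mul_pos h1 (pow_pos h2 _)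

lemma cast_N (hn : 5 ≤ n) : ((Fg n).card : ℝ) = Nr n := by
  rw [N_eq, Nr]
  push_cast [cast_sub_real n (show 1 ≤ n by omega), cast_sub_real n (show 2 ≤ n by omega)]
  norm_num

lemma cast_S1 (hn : 5 ≤ n) : (∑ f ∈ Fg n, (Yc n f : ℝ)) = S1r n := by
  have h := S1_eq n
  have : ((∑ f ∈ Fg n, Yc n f : ℕ) : ℝ) = ∑ f ∈ Fg n, (Yc n f : ℝ) := by push_cast; rfl
  rw [← this, h, S1r, Nr]
  push_cast [cast_sub_real n (show 1 ≤ n by omega), cast_sub_real n (show 2 ≤ n by omega),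
    cast_sub_real n (show 3 ≤ n by omega)]
  norm_num

lemma Yc_ge_one (f : Function.End (Fin n)) (hf : f ∈ Fg n) : 1 ≤ Yc n f := by
  have h0 : (0 : Fin n) ∈ Finset.univ \ Finset.univ.image f := by
    rw [Finset.mem_sdiff]
    refine ⟨Finset.mem_univ _, ?_⟩
    rw [mem_image_End]
    rintro ⟨x, hx⟩
    exact ((mem_Fg_iff n).1 hf).1 x hx
  exact Finset.card_pos.2 ⟨0, h0⟩

lemma cast_S2 (hn : 5 ≤ n) :
    (∑ f ∈ Fg n, ((Yc n f : ℝ) ^ 2 - (Yc n f : ℝ))) = S2r n := by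
  have h := S2_eq n
  have hterm : ∀ f ∈ Fg n, ((Yc n f * (Yc n f - 1) : ℕ) : ℝ)
      = (Yc n f : ℝ) ^ 2 - (Yc n f : ℝ) := by
    intro f hf
    rw [Nat.cast_mul, cast_sub_real (Yc n f) (Yc_ge_one n f hf)]
    push_cast
    ring
  have : ((∑ f ∈ Fg n, Yc n f * (Yc n f - 1) : ℕ) : ℝ)
      = ∑ f ∈ Fg n, ((Yc n f : ℝ) ^ 2 - (Yc n f : ℝ)) := by
    push_cast
    exact Finset.sum_congr rfl (fun f hf => by
      rw [cast_sub_real (Yc n f) (Yc_ge_one n f hf)]; push_cast; ring)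
  rw [← this, h, S2r]
  push_cast [cast_sub_real n (show 1 ≤ n by omega), cast_sub_real n (show 2 ≤ n by omega),
    cast_sub_real n (show 3 ≤ n by omega), cast_sub_real n (show 4 ≤ n by omega)]
  norm_num

lemma var_eq (hn : 5 ≤ n) :
    ∑ f ∈ Fg n, ((Yc n f : ℝ) - muf n) ^ 2 = Vr n := by
  have hN := cast_N n hn
  have hS1 := cast_S1 n hn
  have hS2 := cast_S2 n hn
  have hNpos := Nr_pos n hn
  have expand : ∀ f ∈ Fg n, ((Yc n f : ℝ) - muf n) ^ 2
      = ((Yc n f : ℝ) ^ 2 - (Yc n f : ℝ)) + (1 - 2 * muf n) * (Yc n f : ℝ) + muf n ^ 2 := by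
    intro f _
    ring
  rw [Finset.sum_congr rfl expand, Finset.sum_add_distrib, Finset.sum_add_distrib,
    ← Finset.mul_sum, Finset.sum_const, hS1, hS2, nsmul_eq_mul, hN]
  rw [Vr, muf]
  field_simp
  ring

lemma tau_sq (hn : 5 ≤ n) : tauf n ^ 2 = 3 * Vr n / Nr n + 1 := by
  have hV : 0 ≤ Vr n := by
    rw [← var_eq n hn]
    exact Finset.sum_nonneg (fun f _ => sq_nonneg _)
  rw [tauf, Real.sq_sqrt]
  have := Nr_pos n hn
  positivity

lemma tau_pos (hn : 5 ≤ n) : 0 < tauf n := by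
  rw [tauf]
  apply Real.sqrt_pos.2
  have hV : 0 ≤ Vr n := by
    rw [← var_eq n hn]
    exact Finset.sum_nonneg (fun f _ => sq_nonneg _)
  have := Nr_pos n hn
  positivity

/-- the main fixed-n estimate -/
lemma exists_big (hn : 5 ≤ n) :
    ∃ k, 2 / 3 * Nr n / (2 * tauf n + 1) ≤ ((Uk n k).card : ℝ) := by
  classical
  have hNpos := Nr_pos n hn
  have hN := cast_N n hn
  have hV : 0 ≤ Vr n := by
    rw [← var_eq n hn]
    exact Finset.sum_nonneg (fun f _ => sq_nonneg _)
  have htpos := tau_pos n hn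
  set Gd : Finset (Function.End (Fin n)) :=
    (Fg n).filter (fun f => |(Yc n f : ℝ) - muf n| ≤ tauf n) with hGd
  -- Chebyshev: the bad set is small
  have hbadsum : ((Fg n \ Gd).card : ℝ) * tauf n ^ 2 ≤ Vr n := by
    rw [← var_eq n hn]
    have h1 : ∀ f ∈ Fg n \ Gd, tauf n ^ 2 ≤ ((Yc n f : ℝ) - muf n) ^ 2 := by
      intro f hf
      rw [Finset.mem_sdiff, hGd, Finset.mem_filter, not_and] at hf
      have := hf.2 hf.1
      push_neg at this
      calc tauf n ^ 2 ≤ |(Yc n f : ℝ) - muf n| ^ 2 :=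
            pow_le_pow_left₀ htpos.le (le_of_lt this) 2
        _ = ((Yc n f : ℝ) - muf n) ^ 2 := sq_abs _
    calc ((Fg n \ Gd).card : ℝ) * tauf n ^ 2 = ∑ _f ∈ Fg n \ Gd, tauf n ^ 2 := by
          rw [Finset.sum_const, nsmul_eq_mul]
      _ ≤ ∑ f ∈ Fg n \ Gd, ((Yc n f : ℝ) - muf n) ^ 2 := Finset.sum_le_sum h1
      _ ≤ ∑ f ∈ Fg n, ((Yc n f : ℝ) - muf n) ^ 2 :=
          Finset.sum_le_sum_of_subset_of_nonneg (Finset.sdiff_subset)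
            (fun f _ _ => sq_nonneg _)
  have hbadcard : ((Fg n \ Gd).card : ℝ) ≤ Nr n / 3 := by
    have hX : (0:ℝ) ≤ ((Fg n \ Gd).card : ℝ) := Nat.cast_nonneg _
    rw [tau_sq n hn] at hbadsum
    set X := ((Fg n \ Gd).card : ℝ)
    have h3 : X * (3 * Vr n + Nr n) ≤ Vr n * Nr n := by
      have := mul_le_mul_of_nonneg_right hbadsum (le_of_lt hNpos)
      calc X * (3 * Vr n + Nr n) = X * (3 * Vr n / Nr n + 1) * Nr n := by
            field_simp
        _ ≤ Vr n * Nr n := this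
    nlinarith [mul_nonneg hX hV, mul_nonneg hV hNpos.le]
  have hGdcard : 2 / 3 * Nr n ≤ (Gd.card : ℝ) := by
    have hsub : Gd ⊆ Fg n := Finset.filter_subset _ _
    have : (Fg n \ Gd).card = (Fg n).card - Gd.card := Finset.card_sdiff_of_subset hsub
    have hle : Gd.card ≤ (Fg n).card := Finset.card_le_card hsub
    have : ((Fg n).card : ℝ) - (Gd.card : ℝ) ≤ Nr n / 3 := by
      rw [← Nat.cast_sub hle] at *
      rw [← this]
      exact hbadcard
    linarith [hN ▸ this]
  -- the window
  set J : Finset ℕ := (Finset.range (n + 1)).filter (fun y => |(y : ℝ) - muf n| ≤ tauf n)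
    with hJ
  have hmaps : ∀ f ∈ Gd, Yc n f ∈ J := by
    intro f hf
    rw [hGd, Finset.mem_filter] at hf
    rw [hJ, Finset.mem_filter, Finset.mem_range]
    refine ⟨?_, hf.2⟩
    have : Yc n f ≤ n := by
      have := Finset.card_le_card (Finset.sdiff_subset :
        Finset.univ \ Finset.univ.image f ⊆ Finset.univ)
      simpa [Yc, Finset.card_univ] using this
    omega
  have hGdpos : 0 < (Gd.card : ℝ) := lt_of_lt_of_le (by positivity) hGdcard
  have hGdne : Gd.Nonempty := Finset.card_pos.1 (by exact_mod_cast hGdpos)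
  have hJne : J.Nonempty := ⟨Yc n hGdne.choose, hmaps _ hGdne.choose_spec⟩
  have hJcard : (J.card : ℝ) ≤ 2 * tauf n + 1 := by
    set a := J.min' hJne
    set b := J.max' hJne
    have hab : a ≤ b := J.min'_le _ (J.max'_mem hJne)
    have hsub : J ⊆ Finset.Icc a b := fun y hy =>
      Finset.mem_Icc.2 ⟨J.min'_le y hy, J.le_max' y hy⟩
    have h1 : J.card ≤ b + 1 - a := by
      have := Finset.card_le_card hsub
      rwa [Nat.card_Icc] at this
    have ha : |(a : ℝ) - muf n| ≤ tauf n := (Finset.mem_filter.1 (J.min'_mem hJne)).2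
    have hb : |(b : ℝ) - muf n| ≤ tauf n := (Finset.mem_filter.1 (J.max'_mem hJne)).2
    rw [abs_le] at ha hb
    have h2 : ((b + 1 - a : ℕ) : ℝ) = (b : ℝ) + 1 - a := by
      rw [Nat.cast_sub (by omega)]
      push_cast
      ring
    calc (J.card : ℝ) ≤ ((b + 1 - a : ℕ) : ℝ) := by exact_mod_cast h1
      _ = (b : ℝ) + 1 - a := h2
      _ ≤ 2 * tauf n + 1 := by linarith
  -- pigeonhole
  have hfib : (Gd.card : ℝ) = ∑ y ∈ J, ((Gd.filter (fun f => Yc n f = y)).card : ℝ) := by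
    rw [Finset.card_eq_sum_card_fiberwise hmaps]
    push_cast
    rfl
  have hpigeon : ∃ y ∈ J, (Gd.card : ℝ) / J.card
      ≤ ((Gd.filter (fun f => Yc n f = y)).card : ℝ) := by
    have hJpos : (0:ℝ) < J.card := by
      exact_mod_cast Finset.card_pos.2 hJne
    apply Finset.exists_le_of_sum_le hJne
    rw [← hfib, Finset.sum_const, nsmul_eq_mul]
    rw [mul_div_cancel₀]
    exact ne_of_gt hJpos
  obtain ⟨y, hy, hcard⟩ := hpigeon
  refine ⟨n - y, ?_⟩
  have hsubU : Gd.filter (fun f => Yc n f = y) ⊆ Uk n (n - y) := by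
    intro f hf
    rw [Finset.mem_filter] at hf
    have hfGd := Finset.mem_filter.1 hf.1
    rw [Uk, Finset.mem_filter]
    refine ⟨hfGd.1, ?_⟩
    · have h1 : Yc n f = n - rk n f := by
        rw [Yc, Finset.card_sdiff_of_subset (Finset.subset_univ _), Finset.card_univ, Fintype.card_fin]
        rfl
      have h2 : rk n f ≤ n := by
        have := Finset.card_le_card (Finset.subset_univ (Finset.univ.image f))
        simpa [rk, Finset.card_univ] using this
      omega
  have hfinal : (Gd.card : ℝ) / J.card ≤ ((Uk n (n - y)).card : ℝ) :=
    le_trans hcard (by exact_mod_cast Finset.card_le_card hsubU)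
  refine le_trans ?_ hfinal
  have hJpos : (0:ℝ) < J.card := by exact_mod_cast Finset.card_pos.2 hJne
  exact div_le_div₀ hGdpos.le hGdcard hJpos hJcard

end Cheb
section Asymp

open Real

lemma tendsto_cast_atTop : Tendsto (fun n : ℕ => (n : ℝ)) atTop atTop :=
  tendsto_natCast_atTop_atTop

lemma tendsto_cast_add_atTop (b : ℝ) : Tendsto (fun n : ℕ => (n : ℝ) + b) atTop atTop :=
  tendsto_atTop_add_const_right _ b tendsto_cast_atTop

/-- fractions of linear functions tend to 1 -/
lemma Hfrac (a b : ℝ) : Tendsto (fun n : ℕ => ((n : ℝ) + a) / ((n : ℝ) + b)) atTop (nhds 1) := by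
  have h1 : Tendsto (fun n : ℕ => ((n : ℝ) + b)⁻¹) atTop (nhds 0) :=
    (tendsto_cast_add_atTop b).inv_tendsto_atTop
  have h2 : Tendsto (fun n : ℕ => 1 + (a - b) * ((n : ℝ) + b)⁻¹) atTop (nhds (1 + (a - b) * 0)) :=
    tendsto_const_nhds.add (tendsto_const_nhds.mul h1)
  rw [show (1 : ℝ) + (a - b) * 0 = 1 by ring] at h2
  refine h2.congr' ?_
  filter_upwards [(tendsto_cast_atTop.eventually_gt_atTop (-b))] with n hn
  have hnb : (n : ℝ) + b ≠ 0 := by linarith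
  field_simp
  ring

/-- main exponential limit -/
lemma GH (a b : ℝ) :
    Tendsto (fun n : ℕ => (((n : ℝ) + a) / ((n : ℝ) + b)) ^ n) atTop
      (nhds (Real.exp (a - b))) := by
  have h1 := Real.tendsto_one_add_div_pow_exp a
  have h2 := Real.tendsto_one_add_div_pow_exp b
  have h3 := h1.div h2 (Real.exp_ne_zero b)
  rw [← Real.exp_sub] at h3
  refine h3.congr' ?_
  filter_upwards [tendsto_cast_atTop.eventually_gt_atTop 0,
    tendsto_cast_atTop.eventually_gt_atTop (-a), tendsto_cast_atTop.eventually_gt_atTop (-b)]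
    with n hn ha hb
  simp only [Pi.div_apply]
  rw [← div_pow]
  congr 1
  have h0 : (n : ℝ) ≠ 0 := ne_of_gt hn
  have hb0 : (n : ℝ) + b ≠ 0 := by linarith
  field_simp

/-- `((n-3)/(n-2))^(n-1) → e⁻¹` -/
lemma Lr1 : Tendsto (fun n : ℕ => (((n : ℝ) - 3) / ((n : ℝ) - 2)) ^ (n - 1)) atTop
    (nhds (Real.exp (-1))) := by
  rw [← tendsto_add_atTop_iff_nat 1]
  have := GH (-2) (-1)
  rw [show (-2 : ℝ) - (-1) = -1 by ring] at this
  refine this.congr (fun m => ?_)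
  push_cast
  ring_nf

/-- `((n-2)/n)^(n-1) → e⁻²` -/
lemma Lq : Tendsto (fun n : ℕ => (((n : ℝ) - 2) / (n : ℝ)) ^ (n - 1)) atTop
    (nhds (Real.exp (-2))) := by
  rw [← tendsto_add_atTop_iff_nat 1]
  have := GH (-1) 1
  rw [show (-1 : ℝ) - 1 = -2 by ring] at this
  refine this.congr (fun m => ?_)
  push_cast
  ring_nf

/-- the quadratic goes to infinity -/
lemma H_A : Tendsto (fun n : ℕ => ((n : ℝ) - 3) ^ 2) atTop atTop := by
  have h1 : Tendsto (fun n : ℕ => ((n : ℝ) + (-3))) atTop atTop := tendsto_cast_add_atTop (-3)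
  have h2 : Tendsto (fun x : ℝ => x ^ 2) atTop atTop := tendsto_pow_atTop (by norm_num)
  exact (h2.comp h1).congr (fun n => by simp only [Function.comp_apply]; ring)

lemma LAlog : Tendsto (fun n : ℕ =>
    (((n : ℝ) - 3) ^ 2) * Real.log ((((n : ℝ) - 3) ^ 2 - 1) / ((n : ℝ) - 3) ^ 2)) atTop
      (nhds (-1)) := by
  have h1 := Real.tendsto_mul_log_one_add_div_atTop (-1)
  have h2 := h1.comp H_A
  refine h2.congr' ?_
  filter_upwards [tendsto_cast_atTop.eventually_gt_atTop 4] with n hn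
  have hn3 : (0:ℝ) < (n : ℝ) - 3 := by linarith
  have hA : ((n : ℝ) - 3) ^ 2 ≠ 0 := by positivity
  have harg : 1 + (-1) / ((n:ℝ) - 3) ^ 2 = (((n:ℝ) - 3) ^ 2 - 1) / ((n:ℝ) - 3) ^ 2 := by
    field_simp
    ring
  simp only [Function.comp_apply, harg]

end Asymp
section Bracket

open Real

/-- abbreviations (as plain defs to keep terms readable) -/
noncomputable def Af (n : ℕ) : ℝ := ((n : ℝ) - 3) ^ 2
noncomputable def rhof (n : ℕ) : ℝ := (Af n - 1) / Af n
noncomputable def vf (n : ℕ) : ℝ := ((n : ℝ) - 1) * Real.log (rhof n)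

lemma L_w : Tendsto (fun n : ℕ => ((n : ℝ) - 3) * vf n) atTop (nhds (-1)) := by
  have hcoef : Tendsto (fun n : ℕ => ((n : ℝ) - 3) * ((n : ℝ) - 1) / Af n) atTop (nhds 1) := by
    refine (Hfrac (-1) (-3)).congr' ?_
    filter_upwards [tendsto_cast_atTop.eventually_gt_atTop 4] with n hn
    have h3 : ((n : ℝ) - 3) ≠ 0 := ne_of_gt (by linarith)
    have h3' : ((n : ℝ) + (-3)) ≠ 0 := ne_of_gt (by linarith)
    rw [Af]
    field_simp
    ring
  have h := hcoef.mul LAlog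
  rw [show (1 : ℝ) * (-1) = -1 by ring] at h
  refine h.congr' ?_
  filter_upwards [tendsto_cast_atTop.eventually_gt_atTop 4] with n hn
  have h3 : (0:ℝ) < ((n : ℝ) - 3) := by linarith
  have hA : Af n ≠ 0 := by rw [Af]; positivity
  rw [vf, rhof, Af]
  field_simp

lemma L_v0 : Tendsto vf atTop (nhds 0) := by
  have hinv : Tendsto (fun n : ℕ => ((n : ℝ) + (-3))⁻¹) atTop (nhds 0) :=
    (tendsto_cast_add_atTop (-3)).inv_tendsto_atTop
  have h := L_w.mul hinv
  rw [show (-1 : ℝ) * 0 = 0 by ring] at h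
  refine h.congr' ?_
  filter_upwards [tendsto_cast_atTop.eventually_gt_atTop 4] with n hn
  have h3 : ((n : ℝ) + (-3)) ≠ 0 := by linarith
  have h3' : ((n : ℝ) - 3) ≠ 0 := by linarith
  field_simp
  ring

lemma L_vneg : ∀ᶠ n : ℕ in atTop, vf n < 0 := by
  filter_upwards [tendsto_cast_atTop.eventually_gt_atTop 4] with n hn
  have hA : (1:ℝ) < Af n := by
    rw [Af]
    nlinarith
  have hrpos : 0 < rhof n := by
    rw [rhof]
    have : (0:ℝ) < Af n := by linarith
    have : (0:ℝ) < Af n - 1 := by linarith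
    positivity
  have hrlt : rhof n < 1 := by
    rw [rhof, div_lt_one (by linarith)]
    linarith
  have hlog : Real.log (rhof n) < 0 := Real.log_neg hrpos hrlt
  have hn1 : (0:ℝ) < (n : ℝ) - 1 := by linarith
  rw [vf]
  exact mul_neg_of_pos_of_neg hn1 hlog

lemma L_slope : Tendsto (fun n : ℕ => (Real.exp (vf n) - 1) / vf n) atTop (nhds 1) := by
  have hd := hasDerivAt_exp (0 : ℝ)
  rw [hasDerivAt_iff_tendsto_slope] at hd
  rw [Real.exp_zero] at hd
  have hv : Tendsto vf atTop (nhdsWithin 0 {(0:ℝ)}ᶜ) := by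
    rw [tendsto_nhdsWithin_iff]
    exact ⟨L_v0, L_vneg.mono (fun n hn => by simp [ne_of_lt hn])⟩
  have := hd.comp hv
  refine this.congr' ?_
  filter_upwards with n
  simp [Function.comp_apply, slope_def_field, Real.exp_zero]

/-- the key cancellation limit -/
lemma L_bracket :
    Tendsto (fun n : ℕ => ((n : ℝ) - 3) * ((rhof n) ^ (n - 1) - 1)) atTop (nhds (-1)) := by
  have h := L_w.mul L_slope
  rw [show (-1 : ℝ) * 1 = -1 by ring] at h
  refine h.congr' ?_
  filter_upwards [eventually_ge_atTop 5, L_vneg] with n hn5 hvneg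
  have hn : (4:ℝ) < (n : ℝ) := by
    have : (5:ℝ) ≤ (n:ℝ) := by exact_mod_cast hn5
    linarith
  have hvne : vf n ≠ 0 := ne_of_lt hvneg
  have hA : (1:ℝ) < Af n := by rw [Af]; nlinarith
  have hrpos : 0 < rhof n := by
    rw [rhof]
    have h1 : (0:ℝ) < Af n := by linarith
    have h2 : (0:ℝ) < Af n - 1 := by linarith
    positivity
  have hc : ((n - 1 : ℕ) : ℝ) = (n : ℝ) - 1 := by
    rw [cast_sub_real n (by omega : 1 ≤ n)]
    norm_num
  have hexp : Real.exp (vf n) = (rhof n) ^ (n - 1) := by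
    rw [vf, ← hc, Real.exp_nat_mul, Real.exp_log hrpos]
  rw [hexp]
  field_simp

end Bracket
section Limits

open Real

noncomputable def sigma2 : ℝ := Real.exp (-1) - 2 * Real.exp (-2)

lemma sigma2_pos : 0 < sigma2 := by
  have h1 : Real.exp (-1) = Real.exp (-2) * Real.exp 1 := by
    rw [← Real.exp_add]; norm_num
  have h2 : (2:ℝ) < Real.exp 1 := by
    have := Real.exp_one_gt_d9
    linarith
  have h3 : 0 < Real.exp (-2) := Real.exp_pos _
  rw [sigma2, h1]
  nlinarith

lemma T1 : Tendsto (fun n : ℕ => Nr n / (n : ℝ) ^ n) atTop (nhds (Real.exp (-2))) := by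
  have hfrac : Tendsto (fun n : ℕ => ((n:ℝ) - 1)/(n:ℝ)) atTop (nhds 1) :=
    (Hfrac (-1) 0).congr (fun n => by ring_nf)
  have h := hfrac.mul Lq
  rw [one_mul] at h
  refine h.congr' ?_
  filter_upwards [eventually_ge_atTop 5] with n hn5
  have hx5 : (5:ℝ) ≤ (n:ℝ) := by exact_mod_cast hn5
  have hx : (n:ℝ) ≠ 0 := by linarith
  have hn1 : n - 1 + 1 = n := by omega
  have hpow : ((n:ℝ)) ^ n = (n:ℝ) ^ (n - 1) * (n:ℝ) := by
    calc ((n:ℝ)) ^ n = ((n:ℝ)) ^ (n - 1 + 1) := by rw [hn1]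
      _ = (n:ℝ) ^ (n - 1) * (n:ℝ) := pow_succ _ _
  have hp : ((n:ℝ)) ^ (n - 1) ≠ 0 := pow_ne_zero _ hx
  rw [Nr, div_pow, hpow]
  field_simp

lemma T2 : Tendsto (fun n : ℕ => Vr n / ((n : ℝ) * Nr n)) atTop (nhds sigma2) := by
  have hfrac : Tendsto (fun n : ℕ => ((n:ℝ) - 2)/(n:ℝ)) atTop (nhds 1) :=
    (Hfrac (-2) 0).congr (fun n => by ring_nf)
  have hbr : Tendsto (fun n : ℕ => ((n:ℝ) - 3) * ((rhof n) ^ (n - 1) - 1) - 1) atTop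
      (nhds (-2)) := by
    have h := L_bracket.sub_const 1
    rw [show (-1:ℝ) - 1 = -2 by ring] at h
    exact h
  have hG := (hfrac.mul Lr1).add ((hfrac.mul (Lr1.mul Lr1)).mul hbr)
  have he : Real.exp (-1) * Real.exp (-1) = Real.exp (-2) := by
    rw [← Real.exp_add]; norm_num
  have hval : (1 : ℝ) * Real.exp (-1) + 1 * (Real.exp (-1) * Real.exp (-1)) * (-2)
      = sigma2 := by
    rw [he, sigma2]; ring
  rw [hval] at hG
  refine hG.congr' ?_
  filter_upwards [eventually_ge_atTop 5] with n hn5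
  have hx5 : (5:ℝ) ≤ (n:ℝ) := by exact_mod_cast hn5
  have hx : (n:ℝ) ≠ 0 := by linarith
  have h1 : ((n:ℝ) - 1) ≠ 0 := by linarith
  have h2 : ((n:ℝ) - 2) ≠ 0 := by linarith
  have h3 : ((n:ℝ) - 3) ≠ 0 := by linarith
  have hp1 : ((n:ℝ) - 2) ^ (n - 1) ≠ 0 := pow_ne_zero _ h2
  have hp2 : ((n:ℝ) - 3) ^ (n - 1) ≠ 0 := pow_ne_zero _ h3
  have hA2 : ((((n:ℝ) - 3) ^ 2)) ^ (n - 1)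
      = (((n:ℝ) - 3) ^ (n - 1)) * (((n:ℝ) - 3) ^ (n - 1)) := by
    rw [pow_right_comm]; ring
  have hrho : rhof n ^ (n - 1)
      = ((((n:ℝ) - 4) ^ (n - 1)) * (((n:ℝ) - 2) ^ (n - 1)))
        / ((((n:ℝ) - 3) ^ (n - 1)) * (((n:ℝ) - 3) ^ (n - 1))) := by
    rw [rhof, Af, div_pow, show (((n:ℝ)-3)^2 - 1) = ((n:ℝ)-4)*((n:ℝ)-2) from by ring,
      mul_pow, hA2]
  have hr1 : ((((n:ℝ) - 3)) / (((n:ℝ) - 2))) ^ (n - 1)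
      = (((n:ℝ) - 3) ^ (n - 1)) / (((n:ℝ) - 2) ^ (n - 1)) := div_pow _ _ _
  rw [hr1, hrho, Vr, S1r, S2r, Nr]
  field_simp
  ring

end Limits
section Final

open Real

lemma T3 : Tendsto (fun n : ℕ => (2 * tauf n + 1) / Real.sqrt (n : ℝ)) atTop
    (nhds (2 * Real.sqrt (3 * sigma2))) := by
  have hin : Tendsto (fun n : ℕ => 3 * (Vr n / ((n:ℝ) * Nr n)) + 1 / (n:ℝ)) atTop
      (nhds (3 * sigma2 + 0)) :=
    ((T2.const_mul 3)).add tendsto_one_div_atTop_nhds_zero_nat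
  rw [add_zero] at hin
  have htau : Tendsto (fun n : ℕ => tauf n / Real.sqrt (n : ℝ)) atTop
      (nhds (Real.sqrt (3 * sigma2))) := by
    refine hin.sqrt.congr' ?_
    filter_upwards [eventually_ge_atTop 5] with n hn5
    haveI : NeZero n := ⟨by omega⟩
    have hx5 : (5:ℝ) ≤ (n:ℝ) := by exact_mod_cast hn5
    have hN := Nr_pos n hn5
    have hV : 0 ≤ Vr n := by
      rw [← var_eq n hn5]
      exact Finset.sum_nonneg (fun f _ => sq_nonneg _)
    have harg : 3 * (Vr n / ((n:ℝ) * Nr n)) + 1 / (n:ℝ) = (3 * Vr n / Nr n + 1) / (n:ℝ) := by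
      field_simp
    rw [harg, Real.sqrt_div (by positivity) ((n:ℝ)), tauf]
  have hone : Tendsto (fun n : ℕ => 1 / Real.sqrt (n : ℝ)) atTop (nhds 0) := by
    have h0 := tendsto_one_div_atTop_nhds_zero_nat.sqrt
    rw [Real.sqrt_zero] at h0
    refine h0.congr (fun n => ?_)
    rw [one_div, one_div, Real.sqrt_inv]
  have h := (htau.const_mul 2).add hone
  rw [add_zero] at h
  refine h.congr' ?_
  filter_upwards [eventually_ge_atTop 5] with n hn5
  have hx5 : (5:ℝ) ≤ (n:ℝ) := by exact_mod_cast hn5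
  have hs : Real.sqrt (n:ℝ) ≠ 0 := by
    refine ne_of_gt (Real.sqrt_pos.2 ?_)
    linarith
  field_simp

noncomputable def cconst : ℝ :=
  Real.exp (-2) / (3 * Real.sqrt 3 * Real.sqrt (Real.exp (-1) - 2 * Real.exp (-2)))

lemma main_tendsto : Tendsto
    (fun n : ℕ => (2 / 3 * Nr n / (2 * tauf n + 1)) / (n : ℝ) ^ ((n : ℝ) - 1 / 2)) atTop
      (nhds cconst) := by
  have hσ := sigma2_pos
  have hden : (0:ℝ) < 2 * Real.sqrt (3 * sigma2) := by positivity
  have h3 := T3.inv₀ (ne_of_gt hden)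
  have h := (T1.const_mul (2/3 : ℝ)).mul h3
  have hval : 2 / 3 * Real.exp (-2) * (2 * Real.sqrt (3 * sigma2))⁻¹ = cconst := by
    rw [cconst, show Real.sqrt (3 * sigma2) = Real.sqrt 3 * Real.sqrt sigma2 from
      Real.sqrt_mul (by norm_num) _]
    have hs3 : (0:ℝ) < Real.sqrt 3 := Real.sqrt_pos.2 (by norm_num)
    have hss : (0:ℝ) < Real.sqrt sigma2 := Real.sqrt_pos.2 hσ
    rw [show Real.exp (-1) - 2 * Real.exp (-2) = sigma2 from rfl]
    field_simp
  rw [hval] at h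
  refine h.congr' ?_
  filter_upwards [eventually_ge_atTop 5] with n hn5
  haveI : NeZero n := ⟨by omega⟩
  have hx5 : (5:ℝ) ≤ (n:ℝ) := by exact_mod_cast hn5
  have hxpos : (0:ℝ) < (n:ℝ) := by linarith
  have hsp : (0:ℝ) < Real.sqrt (n:ℝ) := Real.sqrt_pos.2 hxpos
  have htp := tau_pos n hn5
  have hrp : (n : ℝ) ^ ((n : ℝ) - 1 / 2) = (n:ℝ) ^ n / Real.sqrt (n:ℝ) := by
    rw [show ((n:ℝ) - 1/2) = ((n:ℕ):ℝ) - (1/2 : ℝ) from rfl, Real.rpow_sub hxpos,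
      Real.rpow_natCast, ← Real.sqrt_eq_rpow]
  rw [hrp]
  have hxn : ((n:ℝ)) ^ n ≠ 0 := pow_ne_zero _ (ne_of_gt hxpos)
  have ht1 : (2 * tauf n + 1) ≠ 0 := by positivity
  field_simp

end Final
/-- Let `c = e⁻² / (3·√3·√(e⁻¹ − 2e⁻²))`.  Then
(a) `liminf_{n→∞} log₂(N(n)) / n^(n−1/2) ≥ c`, where `N(n)` is the number of
subsemigroups (subsets closed under composition) of `T_n`; and
(b) `liminf_{n→∞} d(n) / n^(n−1/2) ≥ c`, where `d(n)` is the smallest number such that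
every subsemigroup of `T_n` can be generated by at most `d(n)` elements.
(The liminf inequalities are expressed in the usual ε-form.) -/
theorem subsemigroup_count_and_rank_lower_bounds :
    (∀ ε : ℝ, 0 < ε → ∀ᶠ n : ℕ in atTop,
      Real.exp (-2) / (3 * Real.sqrt 3 * Real.sqrt (Real.exp (-1) - 2 * Real.exp (-2))) - ε ≤
        Real.logb 2 (Nat.card (Subsemigroup (Function.End (Fin n)))) /
          (n : ℝ) ^ ((n : ℝ) - 1 / 2)) ∧
    (∀ ε : ℝ, 0 < ε → ∀ᶠ n : ℕ in atTop,
      Real.exp (-2) / (3 * Real.sqrt 3 * Real.sqrt (Real.exp (-1) - 2 * Real.exp (-2))) - ε ≤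
        (minGeneratorBound n : ℝ) / (n : ℝ) ^ ((n : ℝ) - 1 / 2)) := by
  have hc : Real.exp (-2) / (3 * Real.sqrt 3 * Real.sqrt (Real.exp (-1) - 2 * Real.exp (-2)))
      = cconst := rfl
  rw [hc]
  constructor
  · intro ε hε
    have hev := main_tendsto.eventually (eventually_ge_nhds
      (show cconst - ε < cconst by linarith))
    filter_upwards [hev, eventually_ge_atTop 5] with n hn1 hn5
    haveI : NeZero n := ⟨by omega⟩
    obtain ⟨k, hk⟩ := exists_big n hn5
    have hxpos : (0:ℝ) < (n:ℝ) := by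
      have : (5:ℝ) ≤ (n:ℝ) := by exact_mod_cast hn5
      linarith
    have hpowpos : (0:ℝ) < (n:ℝ) ^ ((n:ℝ) - 1/2) := Real.rpow_pos_of_pos hxpos _
    have h1 : cconst - ε ≤ ((Uk n k).card : ℝ) / (n:ℝ) ^ ((n:ℝ) - 1/2) :=
      le_trans hn1 ((div_le_div_iff_of_pos_right hpowpos).2 hk)
    refine le_trans h1 ((div_le_div_iff_of_pos_right hpowpos).2 ?_)
    have h2p : ((2:ℝ)) ^ ((Uk n k).card)
        ≤ ((Nat.card (Subsemigroup (Function.End (Fin n)))) : ℝ) := by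
      exact_mod_cast pow_card_le n k
    have hlogb : ((Uk n k).card : ℝ) = Real.logb 2 ((2:ℝ) ^ (Uk n k).card) := by
      rw [Real.logb_pow, Real.logb_self_eq_one (by norm_num), mul_one]
    rw [hlogb]
    have hpos2 : (0:ℝ) < 2 ^ (Uk n k).card := by positivity
    gcongr
    norm_num
  · intro ε hε
    have hev := main_tendsto.eventually (eventually_ge_nhds
      (show cconst - ε < cconst by linarith))
    filter_upwards [hev, eventually_ge_atTop 5] with n hn1 hn5
    haveI : NeZero n := ⟨by omega⟩
    obtain ⟨k, hk⟩ := exists_big n hn5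
    have hxpos : (0:ℝ) < (n:ℝ) := by
      have : (5:ℝ) ≤ (n:ℝ) := by exact_mod_cast hn5
      linarith
    have hpowpos : (0:ℝ) < (n:ℝ) ^ ((n:ℝ) - 1/2) := Real.rpow_pos_of_pos hxpos _
    have h1 : cconst - ε ≤ ((Uk n k).card : ℝ) / (n:ℝ) ^ ((n:ℝ) - 1/2) :=
      le_trans hn1 ((div_le_div_iff_of_pos_right hpowpos).2 hk)
    refine le_trans h1 ((div_le_div_iff_of_pos_right hpowpos).2 ?_)
    exact_mod_cast card_le_minGen n k
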